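/- arXiv:2012.05678 — 3 statements merged into one kernel-verified Lean document; each statement's English description precedes it below -/
import Mathlib

section
/- Let V = U ⊕ W be a Lagrangian decomposition with respect to a non-degenerate symmetric bilinear form F, and let t ∈ U ⊗ U with associated linear map f_t : W → U, f_t(w) = Σ F(w, aᵢ) bᵢ for t = Σ aᵢ ⊗ bᵢ. Define W_t = { w + f_t(w) | w ∈ W }. Then V = U ⊕ W_t, W_t is commensurable with W (the quotient (W + W_t)/(W ∩ W_t) is finite dimensional), the map W → W_t, w ↦ w + f_t(w) is a linear isomorphism, and W_t = W_{t'} if and only if t = t'. -/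
open TensorProduct LinearMap

lemma dualTensorHom_inj (k M N : Type*) [Field k] [AddCommGroup M] [Module k M]
    [AddCommGroup N] [Module k N] :
    Function.Injective (dualTensorHom k M N) := by
  classical
  rw [injective_iff_map_eq_zero]
  intro x hx
  set b := Module.Basis.ofVectorSpace k N
  set E := (LinearEquiv.lTensor (Module.Dual k M) b.repr).trans
    (TensorProduct.finsuppScalarRight k k (Module.Dual k M) _) with hE
  have key : ∀ (y : Module.Dual k M ⊗[k] N) (i) (m : M),
      (E y) i m = b.repr (dualTensorHom k M N y m) i := by
    intro y
    induction y using TensorProduct.induction_on with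
    | zero => intro i m; simp
    | tmul f n =>
      intro i m
      simp [hE, LinearEquiv.lTensor, TensorProduct.finsuppScalarRight_apply_tmul_apply,
        mul_comm]
    | add y z hy hz =>
      intro i m
      simp [map_add, hy, hz]
  have hE0 : E x = 0 := by
    ext i m
    rw [key, hx]
    simp
  simpa using E.map_eq_zero_iff.mp hE0

noncomputable def tensorToHom
    {k V : Type*} [Field k] [AddCommGroup V] [Module k V]
    (F : LinearMap.BilinForm k V) (U W : Submodule k V) :
    (U ⊗[k] U) →ₗ[k] (W →ₗ[k] U) :=
  (dualTensorHom k W U).comp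
    (TensorProduct.map
      ((LinearMap.lcomp k k W.subtype).comp ((LinearMap.flip F).comp U.subtype)) LinearMap.id)

section Aux
variable {k V : Type*} [Field k] [AddCommGroup V] [Module k V]
    (F : LinearMap.BilinForm k V) (U W : Submodule k V)

lemma tensorToHom_inj (hsymm : F.IsSymm) (hnd : F.Nondegenerate) (hUW : IsCompl U W)
    (hU : ∀ u ∈ U, ∀ u' ∈ U, F u u' = 0) :
    Function.Injective (tensorToHom F U W) := by
  apply Function.Injective.comp (dualTensorHom_inj k ↥W ↥U)
  have hφ : Function.Injective
      (((LinearMap.lcomp k k W.subtype).comp ((LinearMap.flip F).comp U.subtype))) := by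
    rw [injective_iff_map_eq_zero]
    intro a ha
    have hFa : ∀ v : V, F v (a : V) = 0 := by
      intro v
      obtain ⟨u, hu, w, hw, rfl⟩ := Submodule.mem_sup.mp
        (hUW.sup_eq_top ▸ Submodule.mem_top (x := v))
      have h1 : F u (a : V) = 0 := hU u hu a a.2
      have h2 : F w (a : V) = 0 := by
        have := congrArg (fun φ => φ ⟨w, hw⟩) ha
        simpa using this
      simp [h1, h2]
    have : (a : V) = 0 := by
      apply hnd.1
      intro n
      have := hsymm.eq (a : V) n
      rw [this]
      exact hFa n
    exact Subtype.ext this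
  have : TensorProduct.map
      ((LinearMap.lcomp k k W.subtype).comp ((LinearMap.flip F).comp U.subtype))
      (LinearMap.id (M := ↥U)) =
      LinearMap.rTensor ↥U ((LinearMap.lcomp k k W.subtype).comp
        ((LinearMap.flip F).comp U.subtype)) := rfl
  rw [this]
  exact Module.Flat.rTensor_preserves_injective_linearMap _ hφ

lemma range_tensorToHom_fd (t : U ⊗[k] U) :
    FiniteDimensional k ↥(LinearMap.range (tensorToHom F U W t)) := by
  induction t using TensorProduct.induction_on with
  | zero =>
    rw [map_zero, LinearMap.range_zero]
    infer_instance
  | tmul a b =>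
    have hle : LinearMap.range (tensorToHom F U W (a ⊗ₜ[k] b)) ≤ Submodule.span k {b} := by
      rintro x ⟨w, rfl⟩
      simp only [tensorToHom, LinearMap.comp_apply, TensorProduct.map_tmul,
        dualTensorHom_apply, LinearMap.id_coe, id_eq]
      exact Submodule.smul_mem _ _ (Submodule.mem_span_singleton_self b)
    exact Submodule.finiteDimensional_of_le hle
  | add x y hx hy =>
    have hle : LinearMap.range (tensorToHom F U W (x + y)) ≤
        LinearMap.range (tensorToHom F U W x) ⊔ LinearMap.range (tensorToHom F U W y) := by
      rintro z ⟨w, rfl⟩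
      rw [map_add]
      exact Submodule.add_mem_sup ⟨w, rfl⟩ ⟨w, rfl⟩
    exact Submodule.finiteDimensional_of_le hle

end Aux

noncomputable def graphSubspace
    {k V : Type*} [Field k] [AddCommGroup V] [Module k V]
    (F : LinearMap.BilinForm k V) (U W : Submodule k V) (t : U ⊗[k] U) :
    Submodule k V :=
  LinearMap.range (W.subtype + U.subtype.comp (tensorToHom F U W t))

def Commens {k V : Type*} [Field k] [AddCommGroup V] [Module k V]
    (W' W'' : Submodule k V) : Prop :=
  FiniteDimensional k (↥(W' ⊔ W'') ⧸ Submodule.comap (W' ⊔ W'').subtype (W' ⊓ W''))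

/-- For a Lagrangian decomposition `V = U ⊕ W` and `t ∈ U ⊗ U` with associated
map `f_t : W → U` and `W_t = {w + f_t(w)}`: `V = U ⊕ W_t`; `W_t` is commensurable with `W`;
`w ↦ w + f_t(w)` is a linear isomorphism `W → W_t`; and `W_t = W_{t'}` iff `t = t'`. -/
theorem graphSubspace_properties
    {k V : Type*} [Field k] [AddCommGroup V] [Module k V]
    (hchar : (2 : k) ≠ 0)
    (F : LinearMap.BilinForm k V) (hsymm : F.IsSymm) (hnd : F.Nondegenerate)
    (U W : Submodule k V) (hUW : IsCompl U W)
    (hU : ∀ u ∈ U, ∀ u' ∈ U, F u u' = 0)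
    (hW : ∀ w ∈ W, ∀ w' ∈ W, F w w' = 0)
    (t : U ⊗[k] U) :
    IsCompl U (graphSubspace F U W t) ∧
    Commens W (graphSubspace F U W t) ∧
    (∃ e : W ≃ₗ[k] ↥(graphSubspace F U W t),
      ∀ w : W, (e w : V) = (w : V) + (tensorToHom F U W t w : V)) ∧
    (∀ t' : U ⊗[k] U, graphSubspace F U W t = graphSubspace F U W t' ↔ t = t') := by
  set f := tensorToHom F U W t with hf
  set g := W.subtype + U.subtype.comp f with hg
  have hgw : ∀ w : W, g w = (w : V) + (f w : V) := fun w => rfl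
  have hmem : ∀ x, x ∈ graphSubspace F U W t ↔ ∃ w : W, (w : V) + (f w : V) = x := by
    intro x; exact Iff.rfl
  -- zero from U ∩ W
  have hinf : ∀ x : V, x ∈ U → x ∈ W → x = 0 := by
    intro x hxU hxW
    have := hUW.inf_eq_bot ▸ Submodule.mem_inf.mpr ⟨hxU, hxW⟩
    simpa using this
  -- Part 1: IsCompl
  have part1 : IsCompl U (graphSubspace F U W t) := by
    constructor
    · rw [Submodule.disjoint_def]
      intro x hxU hxG
      obtain ⟨w, hw⟩ := (hmem x).mp hxG
      have hwU : (w : V) ∈ U := by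
        have : (w : V) = x - (f w : V) := by rw [← hw]; abel
        rw [this]
        exact Submodule.sub_mem U hxU (f w).2
      have : (w : V) = 0 := hinf _ hwU w.2
      rw [← hw, this]
      have : w = 0 := Subtype.ext this
      rw [this]
      simp
    · rw [codisjoint_iff, eq_top_iff]
      intro v _
      obtain ⟨u, hu, w, hw, rfl⟩ := Submodule.mem_sup.mp
        (hUW.sup_eq_top ▸ Submodule.mem_top (x := v))
      refine Submodule.mem_sup.mpr ⟨u - (f ⟨w, hw⟩ : V),
        Submodule.sub_mem U hu (f ⟨w, hw⟩).2, w + (f ⟨w, hw⟩ : V),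
        (hmem _).mpr ⟨⟨w, hw⟩, rfl⟩, by abel⟩
  -- Part 3: the isomorphism
  have hginj : Function.Injective g := by
    rw [← LinearMap.ker_eq_bot, LinearMap.ker_eq_bot']
    intro w hw0
    have : (w : V) = -(f w : V) :=
      eq_neg_of_add_eq_zero_left ((hgw w).symm.trans hw0)
    have hwU : (w : V) ∈ U := this ▸ Submodule.neg_mem U (f w).2
    exact Subtype.ext (hinf _ hwU w.2)
  have part3 : ∃ e : W ≃ₗ[k] ↥(graphSubspace F U W t),
      ∀ w : W, (e w : V) = (w : V) + (tensorToHom F U W t w : V) := by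
    refine ⟨LinearEquiv.ofInjective g hginj, fun w => ?_⟩
    exact (LinearEquiv.ofInjective_apply (f := g) (h := hginj) w).trans (hgw w)
  -- Part 4
  have part4 : ∀ t' : U ⊗[k] U, graphSubspace F U W t = graphSubspace F U W t' ↔ t = t' := by
    intro t'
    constructor
    · intro h
      apply tensorToHom_inj F U W hsymm hnd hUW hU
      ext w
      have hmem' : ((w : V) + (f w : V)) ∈ graphSubspace F U W t' := by
        rw [← h]; exact (hmem _).mpr ⟨w, rfl⟩
      obtain ⟨w', hw'⟩ := hmem' -- w' + f' w' = w + f w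
      have hw'' : (w' : V) + (tensorToHom F U W t' w' : V) = (w : V) + (f w : V) := hw'
      have hsplit : (w : V) - (w' : V) = (tensorToHom F U W t' w' : V) - (f w : V) := by
        rw [sub_eq_sub_iff_add_eq_add, ← hw'']
        abel
      have hWmem : (w : V) - (w' : V) ∈ W := Submodule.sub_mem W w.2 w'.2
      have hUmem : (w : V) - (w' : V) ∈ U := hsplit ▸
        Submodule.sub_mem U (tensorToHom F U W t' w').2 (f w).2
      have hww' : (w : V) = (w' : V) := sub_eq_zero.mp (hinf _ hUmem hWmem)
      have hww'2 : w = w' := Subtype.ext hww'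
      rw [← hww'2] at hsplit
      have h0 : (tensorToHom F U W t' w : V) - (f w : V) = 0 :=
        hsplit.symm.trans (sub_self _)
      exact (sub_eq_zero.mp h0).symm
    · rintro rfl; rfl
  -- Part 2: commensurability
  have part2 : Commens W (graphSubspace F U W t) := by
    classical
    unfold Commens
    set Wt := graphSubspace F U W t with hWt
    set B := W ⊔ Wt with hB
    set A := Submodule.comap B.subtype (W ⊓ Wt) with hA
    haveI hfd : FiniteDimensional k ↥(LinearMap.range f) := range_tensorToHom_fd F U W t
    set S := Submodule.map U.subtype (LinearMap.range f) with hS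
    haveI hSfd : FiniteDimensional k ↥S := Module.Finite.map _ _
    have hWB : W ≤ B := le_sup_left
    have hWtB : Wt ≤ B := le_sup_right
    have hSB : S ≤ B := by
      rintro x ⟨u, ⟨w, rfl⟩, rfl⟩
      have h1 : (w : V) + (f w : V) ∈ Wt := (hmem _).mpr ⟨w, rfl⟩
      have h2 : U.subtype (f w) = ((w : V) + (f w : V)) - (w : V) := by
        simp
      rw [h2]
      exact Submodule.sub_mem B (hWtB h1) (hWB w.2)
    set h₁ : ↥W →ₗ[k] (↥B ⧸ A) := A.mkQ.comp (Submodule.inclusion hWB) with hh₁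
    set h₂ : ↥S →ₗ[k] (↥B ⧸ A) := A.mkQ.comp (Submodule.inclusion hSB) with hh₂
    have hker : LinearMap.ker f ≤ LinearMap.ker h₁ := by
      intro w hw
      have hw0 : f w = 0 := hw
      have hwWt : (w : V) ∈ Wt := (hmem _).mpr ⟨w, by rw [hw0]; simp⟩
      have : Submodule.inclusion hWB w ∈ A := by
        rw [hA, Submodule.mem_comap]
        exact Submodule.mem_inf.mpr ⟨w.2, hwWt⟩
      simpa [hh₁, LinearMap.mem_ker, Submodule.Quotient.mk_eq_zero] using this
    have hr1 : FiniteDimensional k ↥(LinearMap.range h₁) := by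
      haveI : FiniteDimensional k (↥W ⧸ LinearMap.ker f) :=
        f.quotKerEquivRange.symm.finiteDimensional
      rw [← Submodule.range_liftQ (LinearMap.ker f) h₁ hker]
      infer_instance
    have hr2 : FiniteDimensional k ↥(LinearMap.range h₂) := inferInstance
    have htop : LinearMap.range h₁ ⊔ LinearMap.range h₂ = ⊤ := by
      rw [eq_top_iff]
      rintro q -
      obtain ⟨b, rfl⟩ := A.mkQ_surjective q
      obtain ⟨w0, hw0, x, hx, hbeq⟩ := Submodule.mem_sup.mp b.2
      obtain ⟨w', hw'⟩ := (hmem x).mp hx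
      have hb1m : w0 + (w' : V) ∈ W := Submodule.add_mem W hw0 w'.2
      have hb2m : (f w' : V) ∈ S := ⟨f w', ⟨w', rfl⟩, rfl⟩
      set b₁ : ↥B := ⟨w0 + (w' : V), hWB hb1m⟩
      set b₂ : ↥B := ⟨(f w' : V), hSB hb2m⟩
      have hbsum : b = b₁ + b₂ := by
        apply Subtype.ext
        show (b : V) = (w0 + (w' : V)) + (f w' : V)
        rw [← hbeq, ← hw']
        abel
      rw [hbsum, map_add]
      refine Submodule.add_mem_sup ⟨⟨w0 + (w' : V), hb1m⟩, rfl⟩ ⟨⟨(f w' : V), hb2m⟩, rfl⟩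
    haveI hfdsup : FiniteDimensional k ↥(LinearMap.range h₁ ⊔ LinearMap.range h₂) :=
      Submodule.finiteDimensional_sup _ _
    haveI : FiniteDimensional k ↥(⊤ : Submodule k (↥B ⧸ A)) := htop ▸ hfdsup
    exact Submodule.topEquiv.finiteDimensional
  exact ⟨part1, part2, part3, part4⟩
end

section
/- Let V = U ⊕ W be a Lagrangian decomposition with respect to a non-degenerate symmetric bilinear form F. Then the map t ↦ W_t gives a bijection between Λ²U and the set of subspaces W̃ ⊆ V such that V = U ⊕ W̃, W̃ = W̃^⊥, and W̃ is commensurable with W. -/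
open TensorProduct

namespace LagrAux

variable {k V : Type*} [Field k] [AddCommGroup V] [Module k V]
variable (F : LinearMap.BilinForm k V) (U W : Submodule k V)

noncomputable def gmap (f : W →ₗ[k] U) : W →ₗ[k] V := W.subtype + U.subtype.comp f

noncomputable def gsub (f : W →ₗ[k] U) : Submodule k V := LinearMap.range (gmap U W f)

lemma gmap_apply (f : W →ₗ[k] U) (w : W) : gmap U W f w = (w : V) + (f w : V) := rfl

lemma mem_gsub {f : W →ₗ[k] U} {x : V} :
    x ∈ gsub U W f ↔ ∃ w : W, (w : V) + (f w : V) = x := Iff.rfl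

lemma graphSubspace_eq (t : U ⊗[k] U) :
    graphSubspace F U W t = gsub U W (tensorToHom F U W t) := rfl

lemma tensorToHom_tmul (a b : U) (w : W) :
    tensorToHom F U W (a ⊗ₜ[k] b) w = F w a • b := by
  simp [tensorToHom]

lemma eq_zero_of_ortho (hsymm : F.IsSymm) (hnd : F.Nondegenerate)
    (hco : U ⊔ W = ⊤) (hU : ∀ u ∈ U, ∀ u' ∈ U, F u u' = 0)
    (a : U) (h : ∀ w : W, F w a = 0) : a = 0 := by
  have key : ∀ v : V, F a v = 0 := by
    intro v
    have hv : v ∈ U ⊔ W := hco ▸ Submodule.mem_top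
    obtain ⟨u, hu, w, hw, rfl⟩ := Submodule.mem_sup.mp hv
    have h1 : F (a : V) u = 0 := hU _ a.2 u hu
    have h2 : F (a : V) w = 0 := by
      have := h ⟨w, hw⟩
      rw [← hsymm.eq]
      simpa using this
    rw [map_add, h1, h2, add_zero]
  exact Subtype.ext (hnd.1 _ key)

lemma swap_eval (s : U ⊗[k] U) (w w' : W) :
    F w (tensorToHom F U W s w') = F w' (tensorToHom F U W ((TensorProduct.comm k U U) s) w) := by
  induction s using TensorProduct.induction_on with
  | zero => simp
  | tmul a b => simp [tensorToHom_tmul, mul_comm]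
  | add x y hx hy =>
    simp only [map_add, LinearMap.add_apply, Submodule.coe_add, map_add, hx, hy]

lemma tensorToHom_injective (hsymm : F.IsSymm) (hnd : F.Nondegenerate)
    (hco : U ⊔ W = ⊤) (hU : ∀ u ∈ U, ∀ u' ∈ U, F u u' = 0) :
    Function.Injective (tensorToHom F U W) := by
  classical
  have hzero := eq_zero_of_ortho F U W hsymm hnd hco hU
  have key : ∀ t, tensorToHom F U W t = 0 → t = 0 := by
    intro t ht
    set b := Module.Basis.ofVectorSpace k U with hb
    set e := TensorProduct.equivFinsuppOfBasisRight (M := U) b with he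
    set g := e t with hg
    have ht' : t = g.sum fun i a => a ⊗ₜ[k] (b i : U) := by
      have h1 := TensorProduct.equivFinsuppOfBasisRight_symm_apply (M := U) b (e t)
      rw [LinearEquiv.symm_apply_apply] at h1
      rw [hg]
      exact h1
    have hcoeff : ∀ (w : W) (i), F w (g i) = 0 := by
      intro w i
      have h2 : tensorToHom F U W t w = 0 := by rw [ht]; rfl
      rw [ht', map_finsuppSum] at h2
      have h3 : (g.sum fun i a => tensorToHom F U W (a ⊗ₜ[k] (b i))) w
          = g.sum fun i a => F w a • (b i : U) := by
        rw [LinearMap.finsupp_sum_apply]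
        exact Finsupp.sum_congr fun i _ => tensorToHom_tmul F U W _ _ _
      rw [h3] at h2
      set l : _ →₀ k := g.mapRange (fun (a : U) => F w (a : V)) (by simp) with hl
      have h4 : Finsupp.linearCombination k (fun i => (b i : U)) l = 0 := by
        rw [Finsupp.linearCombination_apply, hl, Finsupp.sum_mapRange_index (by simp)]
        exact h2
      have h5 : l = 0 := linearIndependent_iff.mp b.linearIndependent l h4
      have := Finsupp.ext_iff.mp h5 i
      simpa [hl] using this
    have hgz : g = 0 := by
      ext i
      have := hzero (g i) (fun w => hcoeff w i)
      simp [this]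
    rw [ht', hgz, Finsupp.sum_zero_index]
  intro x y hxy
  have := key (x - y) (by rw [map_sub, hxy, sub_self])
  exact sub_eq_zero.mp this

lemma isCompl_gsub (hUW : IsCompl U W) (f : W →ₗ[k] U) : IsCompl U (gsub U W f) := by
  constructor
  · rw [Submodule.disjoint_def]
    intro x hxU hxG
    obtain ⟨w, hw⟩ := mem_gsub U W |>.mp hxG
    have hwU : (w : V) ∈ U := by
      have : (w : V) = x - (f w : V) := by rw [← hw]; abel
      rw [this]; exact sub_mem hxU (f w).2
    have hw0 : (w : V) = 0 := Submodule.disjoint_def.mp hUW.disjoint _ hwU w.2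
    have : w = 0 := Subtype.ext hw0
    rw [← hw, this]; simp
  · rw [codisjoint_iff, eq_top_iff]
    intro v _
    have hv : v ∈ U ⊔ W := by rw [codisjoint_iff.mp hUW.codisjoint]; trivial
    obtain ⟨u, hu, w, hw, rfl⟩ := Submodule.mem_sup.mp hv
    refine Submodule.mem_sup.mpr ⟨u - (f ⟨w, hw⟩ : V), sub_mem hu (f ⟨w, hw⟩).2,
      (⟨w, hw⟩ : W) + (f ⟨w, hw⟩ : V), ⟨⟨w, hw⟩, rfl⟩, by abel⟩

lemma eq_orthogonal (hsymm : F.IsSymm) (hnd : F.Nondegenerate)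
    (hU : ∀ u ∈ U, ∀ u' ∈ U, F u u' = 0) {W' : Submodule k V} (hsup : U ⊔ W' = ⊤)
    (hiso : ∀ x ∈ W', ∀ y ∈ W', F x y = 0) : W' = F.orthogonal W' := by
  apply le_antisymm
  · intro x hx
    rw [LinearMap.BilinForm.mem_orthogonal_iff]
    intro n hn
    exact hiso n hn x hx
  · intro x hx
    have hxv : x ∈ U ⊔ W' := hsup ▸ Submodule.mem_top
    obtain ⟨u, hu, w', hw', rfl⟩ := Submodule.mem_sup.mp hxv
    have hu0 : u = 0 := by
      apply hnd.1
      intro v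
      have hvv : v ∈ U ⊔ W' := hsup ▸ Submodule.mem_top
      obtain ⟨u'', hu'', w'', hw'', rfl⟩ := Submodule.mem_sup.mp hvv
      have h1 : F u u'' = 0 := hU _ hu _ hu''
      have h2 : F (u + w') w'' = 0 := by
        have hxo := LinearMap.BilinForm.mem_orthogonal_iff.mp hx w'' hw''
        rw [← hsymm.eq]
        simpa using hxo
      have h3 : F w' w'' = 0 := hiso _ hw' _ hw''
      have h4 : F u w'' = 0 := by
        have := h2; rw [map_add, LinearMap.add_apply, h3, add_zero] at this; exact this
      rw [map_add, h1, h4, add_zero]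
    simpa [hu0] using hw'

lemma gsub_inj (hdisj : Disjoint U W) {f g : W →ₗ[k] U}
    (h : gsub U W f = gsub U W g) : f = g := by
  ext w
  have hmem : (w : V) + (f w : V) ∈ gsub U W g := h ▸ ⟨w, rfl⟩
  obtain ⟨w', hw'⟩ := (mem_gsub U W).mp hmem
  have hdiff : (w : V) - (w' : V) = (g w' : V) - (f w : V) := by
    rw [sub_eq_sub_iff_add_eq_add]; exact hw'.symm.trans (add_comm _ _)
  have h1 : (w : V) - (w' : V) ∈ W := sub_mem w.2 w'.2
  have h2 : (w : V) - (w' : V) ∈ U := hdiff ▸ sub_mem (g w').2 (f w).2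
  have h0 : (w : V) - (w' : V) = 0 := Submodule.disjoint_def.mp hdisj _ h2 h1
  have hww' : w = w' := Subtype.ext (by rwa [sub_eq_zero] at h0)
  have : (g w' : V) - (f w : V) = 0 := by rw [← hdiff, h0]
  have hfg : (f w : V) = (g w' : V) := by rwa [sub_eq_zero, eq_comm] at this
  rw [hww'] at hfg ⊢
  exact hfg

lemma gsub_isotropic (hsymm : F.IsSymm)
    (hU : ∀ u ∈ U, ∀ u' ∈ U, F u u' = 0)
    (hW : ∀ w ∈ W, ∀ w' ∈ W, F w w' = 0)
    {t : U ⊗[k] U} (ht : t + (TensorProduct.comm k U U) t = 0) :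
    ∀ x ∈ gsub U W (tensorToHom F U W t), ∀ y ∈ gsub U W (tensorToHom F U W t), F x y = 0 := by
  set J := tensorToHom F U W with hJ
  intro x hx y hy
  obtain ⟨w, hw⟩ := (mem_gsub U W).mp hx
  obtain ⟨w', hw'⟩ := (mem_gsub U W).mp hy
  rw [← hw, ← hw']
  have e1 : F (w : V) (w' : V) = 0 := hW _ w.2 _ w'.2
  have e2 : F ((J t w : U) : V) ((J t w' : U) : V) = 0 := hU _ (J t w).2 _ (J t w').2
  have e3 : F ((J t w : U) : V) (w' : V) = F (w' : V) ((J t w : U) : V) := by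
    have := hsymm.eq ((J t w : U) : V) (w' : V); simpa using this
  have e4 : F (w : V) ((J t w' : U) : V)
      = F (w' : V) ((J ((TensorProduct.comm k U U) t) w : U) : V) :=
    swap_eval F U W t w w'
  have h0 : J ((TensorProduct.comm k U U) t) w + J t w = (0 : U) := by
    have hct : (TensorProduct.comm k U U) t + t = 0 := by rw [add_comm]; exact ht
    rw [← LinearMap.add_apply, ← map_add, hct]
    simp
  have e5 : F (w' : V) ((J ((TensorProduct.comm k U U) t) w : U) : V)
      + F (w' : V) ((J t w : U) : V) = 0 := by
    rw [← map_add, ← Submodule.coe_add, h0]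
    simp
  simp only [map_add, LinearMap.add_apply]
  linear_combination e1 + e2 + e3 + e4 + e5

lemma finiteDimensional_range_tensorToHom (t : U ⊗[k] U) :
    FiniteDimensional k (LinearMap.range (tensorToHom F U W t)) := by
  induction t using TensorProduct.induction_on with
  | zero =>
    rw [map_zero, LinearMap.range_zero]
    infer_instance
  | tmul a b =>
    have hle : LinearMap.range (tensorToHom F U W (a ⊗ₜ[k] b)) ≤ k ∙ b := by
      rintro x ⟨w, rfl⟩
      rw [tensorToHom_tmul]
      exact Submodule.smul_mem _ _ (Submodule.mem_span_singleton_self b)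
    exact Submodule.finiteDimensional_of_le hle
  | add x y hx hy =>
    have hle : LinearMap.range (tensorToHom F U W (x + y))
        ≤ LinearMap.range (tensorToHom F U W x) ⊔ LinearMap.range (tensorToHom F U W y) := by
      rintro z ⟨w, rfl⟩
      rw [map_add, LinearMap.add_apply]
      exact Submodule.add_mem_sup ⟨w, rfl⟩ ⟨w, rfl⟩
    haveI := hx; haveI := hy
    exact Submodule.finiteDimensional_of_le hle

lemma commens_gsub (hUW : IsCompl U W) (f : W →ₗ[k] U)
    [hfd : FiniteDimensional k (LinearMap.range f)] :
    Commens (gsub U W f) W := by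
  classical
  unfold Commens
  set G := gsub U W f with hG
  set S := G ⊔ W with hS
  set T := Submodule.comap S.subtype (G ⊓ W) with hT
  set q := T.mkQ with hq
  have hWS : W ≤ S := le_sup_right
  set α : W →ₗ[k] (↥S ⧸ T) := q.comp (Submodule.inclusion hWS) with hα
  have hkerα : LinearMap.ker f ≤ LinearMap.ker α := by
    intro w hw
    rw [LinearMap.mem_ker] at hw ⊢
    rw [hα]
    simp only [LinearMap.comp_apply, hq, Submodule.mkQ_apply]
    rw [Submodule.Quotient.mk_eq_zero, hT, Submodule.mem_comap]
    refine Submodule.mem_inf.mpr ⟨⟨w, ?_⟩, ?_⟩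
    · rw [gmap_apply, hw]; simp
    · exact w.2
  haveI : FiniteDimensional k (W ⧸ LinearMap.ker f) :=
    LinearEquiv.finiteDimensional (f.quotKerEquivRange).symm
  have hfinα : FiniteDimensional k (LinearMap.range α) := by
    rw [← Submodule.range_liftQ (LinearMap.ker f) α hkerα]
    infer_instance
  set R := Submodule.map U.subtype (LinearMap.range f) with hR
  have hRS : R ≤ S := by
    rintro x ⟨u, ⟨w, rfl⟩, rfl⟩
    have h1 : ((w : V) + (f w : V)) ∈ S := le_sup_left (a := G) ⟨w, rfl⟩
    have h2 : (w : V) ∈ S := hWS w.2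
    have h3 : (U.subtype (f w)) = ((w : V) + (f w : V)) - (w : V) := by simp
    rw [h3]
    exact sub_mem h1 h2
  haveI : FiniteDimensional k R := by
    rw [hR]
    exact Module.Finite.map _ _
  set β : R →ₗ[k] (↥S ⧸ T) := q.comp (Submodule.inclusion hRS) with hβ
  have hfinβ : FiniteDimensional k (LinearMap.range β) := inferInstance
  have htop : LinearMap.range α ⊔ LinearMap.range β = ⊤ := by
    rw [eq_top_iff]
    rintro x -
    obtain ⟨s, rfl⟩ := Submodule.mkQ_surjective T x
    obtain ⟨g, hg, w, hw, hgw⟩ := Submodule.mem_sup.mp s.2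
    obtain ⟨w₁, hw₁⟩ := (mem_gsub U W).mp hg
    have hfw : (U.subtype (f w₁)) ∈ R := ⟨f w₁, ⟨w₁, rfl⟩, rfl⟩
    have hsum : (Submodule.inclusion hWS (w₁ + ⟨w, hw⟩))
        + (Submodule.inclusion hRS ⟨U.subtype (f w₁), hfw⟩) = s := by
      apply Subtype.ext
      rw [Submodule.coe_add, Submodule.coe_inclusion, Submodule.coe_inclusion]
      show ((w₁ + ⟨w, hw⟩ : W) : V) + (U.subtype (f w₁)) = (s : V)
      rw [Submodule.coe_add]
      show ((w₁ : V) + w) + (f w₁ : V) = (s : V)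
      rw [← hgw, ← hw₁]
      abel
    refine Submodule.mem_sup.mpr ⟨α (w₁ + ⟨w, hw⟩), ⟨_, rfl⟩,
      β ⟨U.subtype (f w₁), hfw⟩, ⟨_, rfl⟩, ?_⟩
    rw [hα, hβ]
    simp only [LinearMap.comp_apply]
    rw [← map_add, hsum]
  haveI := Submodule.finiteDimensional_sup (LinearMap.range α) (LinearMap.range β)
  rw [htop] at this
  exact LinearEquiv.finiteDimensional (Submodule.topEquiv (R := k) (M := ↥S ⧸ T))

lemma exists_dual_family {M : Type*} [AddCommGroup M] [Module k M] {n : ℕ}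
    (ψ : Fin n → Module.Dual k M) (hψ : LinearIndependent k ψ) :
    ∃ w : Fin n → M, ∀ i j, ψ i (w j) = if i = j then 1 else 0 := by
  classical
  set e : M →ₗ[k] (Fin n → k) := LinearMap.pi ψ with he
  have hsurj : Function.Surjective e := by
    intro x
    by_contra hx
    have hxm : x ∉ LinearMap.range e := by
      rw [LinearMap.mem_range]
      exact hx
    obtain ⟨φ, hφx, hφ⟩ := Submodule.exists_dual_map_eq_bot_of_notMem hxm inferInstance
    have hcomp : ∀ m : M, φ (e m) = 0 := by
      intro m
      have : φ (e m) ∈ (LinearMap.range e).map φ := Submodule.mem_map_of_mem ⟨m, rfl⟩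
      rw [hφ] at this
      exact this
    set lam : Fin n → k := fun i => φ (Pi.single i 1) with hlam
    have hrep : ∀ x' : Fin n → k, φ x' = ∑ i, x' i * lam i := by
      intro x'
      have hx' : x' = ∑ i, Pi.single i (x' i) := by
        rw [Finset.univ_sum_single]
      rw [hx', map_sum]
      congr 1
      ext i
      have : (Pi.single i (x' i) : Fin n → k) = x' i • (Pi.single i (1 : k) : Fin n → k) := by
        ext j
        by_cases h : j = i <;> simp [Pi.single_apply, h]
      rw [this, map_smul, smul_eq_mul]
      simp [Finset.univ_sum_single, hlam]
    have hlam0 : ∀ i, lam i = 0 := by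
      have h0 : ∑ i, lam i • ψ i = 0 := by
        ext m
        have := hcomp m
        rw [hrep] at this
        simpa [he, mul_comm] using this
      exact Fintype.linearIndependent_iff.mp hψ lam h0
    apply hφx
    rw [hrep x]
    simp [hlam0]
  choose w hw using fun j => hsurj (Pi.single j 1)
  refine ⟨w, fun i j => ?_⟩
  have := congrFun (hw j) i
  rw [he] at this
  simp only [LinearMap.pi_apply] at this
  rw [this, Pi.single_apply]

lemma findim_range_of_commens (hUW : IsCompl U W) (f : W →ₗ[k] U)
    (hcom : Commens (gsub U W f) W) : FiniteDimensional k (LinearMap.range f) := by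
  classical
  set G := gsub U W f with hG
  set S := G ⊔ W with hS
  set T := Submodule.comap S.subtype (G ⊓ W) with hT
  haveI hQ : FiniteDimensional k (↥S ⧸ T) := hcom
  set p' := U.projectionOnto W hUW with hp'
  set γ : ↥S →ₗ[k] U := p'.comp S.subtype with hγ
  have hker : T ≤ LinearMap.ker γ := by
    intro x hx
    rw [LinearMap.mem_ker, hγ, LinearMap.comp_apply]
    have hxW : (S.subtype x : V) ∈ W := (Submodule.mem_comap.mp hx).2
    have : S.subtype x ∈ LinearMap.ker p' := by
      rw [hp', Submodule.ker_projectionOnto]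
      exact hxW
    exact this
  set γb := T.liftQ γ hker with hγb
  have hrange : LinearMap.range γb = LinearMap.range f := by
    rw [hγb, Submodule.range_liftQ]
    apply le_antisymm
    · rintro x ⟨s, rfl⟩
      have hsS : (s : V) ∈ S := s.2
      obtain ⟨g, hg, w, hw, hgw⟩ := Submodule.mem_sup.mp hsS
      obtain ⟨w₁, hw₁⟩ := (mem_gsub U W).mp hg
      refine ⟨w₁, ?_⟩
      rw [hγ, LinearMap.comp_apply]
      have hsval : S.subtype s = (w₁ : V) + ((f w₁ : V) + w) := by
        rw [Submodule.coe_subtype, ← hgw, ← hw₁]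
        abel
      rw [hsval, map_add]
      have hz1 : p' (w₁ : V) = 0 := by
        have : (w₁ : V) ∈ LinearMap.ker p' := by
          rw [hp', Submodule.ker_projectionOnto]; exact w₁.2
        simpa using this
      have hz2 : p' ((f w₁ : V) + w) = f w₁ := by
        rw [map_add]
        have h1 : p' (f w₁ : V) = f w₁ := Submodule.linearProjOfIsCompl_apply_left hUW (f w₁)
        have h2 : p' w = 0 := by
          have : w ∈ LinearMap.ker p' := by
            rw [hp', Submodule.ker_projectionOnto]; exact hw
          simpa using this
        rw [h1, h2, add_zero]
      rw [hz1, hz2, zero_add]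
    · rintro x ⟨w, rfl⟩
      have hmem : ((w : V) + (f w : V)) ∈ S := le_sup_left (a := G) ⟨w, rfl⟩
      refine ⟨⟨_, hmem⟩, ?_⟩
      rw [hγ, LinearMap.comp_apply]
      have : S.subtype ⟨(w : V) + (f w : V), hmem⟩ = (w : V) + (f w : V) := rfl
      rw [this, map_add]
      have h1 : p' (w : V) = 0 := by
        have : (w : V) ∈ LinearMap.ker p' := by
          rw [hp', Submodule.ker_projectionOnto]; exact w.2
        simpa using this
      have h2 : p' (f w : V) = f w := Submodule.linearProjOfIsCompl_apply_left hUW (f w)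
      rw [h1, h2, zero_add]
  rw [← hrange]
  infer_instance

lemma exists_tensor (hsymm : F.IsSymm) (hnd : F.Nondegenerate)
    (hco : U ⊔ W = ⊤) (hU : ∀ u ∈ U, ∀ u' ∈ U, F u u' = 0)
    (f : W →ₗ[k] U) [hfd : FiniteDimensional k (LinearMap.range f)]
    (hanti : ∀ w w' : W, F w ((f w' : U) : V) + F w' ((f w : U) : V) = 0) :
    ∃ t : U ⊗[k] U, tensorToHom F U W t = f := by
  classical
  set R := LinearMap.range f with hRdef
  set n := Module.finrank k R with hn
  set b : Module.Basis (Fin n) k R := Module.finBasis k R with hb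
  set f' : W →ₗ[k] R := f.rangeRestrict with hf'
  set c : Fin n → Module.Dual k W := fun i => (b.coord i).comp f' with hc
  set ψ : Fin n → Module.Dual k W :=
    fun i => (F.flip (((b i : U) : V))).comp W.subtype with hψ
  have hψ_apply : ∀ i (w : W), ψ i w = F (w : V) (((b i : U) : V)) := fun i w => rfl
  have hfcoe : ∀ w : W, f w = ((f' w : U)) := fun w => rfl
  have hf_eq : ∀ w : W, f w = ∑ i, c i w • (b i : U) := by
    intro w
    have h1 : f' w = ∑ i, b.repr (f' w) i • b i := (b.sum_repr (f' w)).symm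
    rw [hfcoe w, h1, Submodule.coe_sum]
    apply Finset.sum_congr rfl
    intro i _
    rw [Submodule.coe_smul]
    rfl
  have hψli : LinearIndependent k ψ := by
    rw [Fintype.linearIndependent_iff]
    intro lam hlam i
    set a : U := ∑ j, lam j • (b j : U) with ha
    have haz : a = 0 := by
      apply eq_zero_of_ortho F U W hsymm hnd hco hU
      intro w
      have h3 : F (w : V) ((a : U) : V) = ∑ j, lam j • (ψ j w) := by
        rw [ha, Submodule.coe_sum, map_sum]
        apply Finset.sum_congr rfl
        intro j _
        rw [Submodule.coe_smul, map_smul]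
        rfl
      rw [h3]
      have h4 : ∑ j, lam j • (ψ j w) = (∑ j, lam j • ψ j) w := by
        rw [LinearMap.sum_apply]
        apply Finset.sum_congr rfl
        intro j _
        rfl
      rw [h4, hlam]
      rfl
    have hcoe : ((∑ j, lam j • b j : R) : U) = a := by
      rw [ha, Submodule.coe_sum]
      apply Finset.sum_congr rfl
      intro j _
      rw [Submodule.coe_smul]
    have hsumR : (∑ j, lam j • b j : R) = 0 := Subtype.ext (by rw [hcoe, haz]; rfl)
    exact Fintype.linearIndependent_iff.mp b.linearIndependent lam hsumR i
  obtain ⟨wv, hwv⟩ := exists_dual_family ψ hψli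
  have hcj : ∀ j (w : W), c j w = F (w : V) (((-(f (wv j)) : U) : V)) := by
    intro j w
    have h5 := hanti (wv j) w
    have h6 : F ((wv j : W) : V) ((f w : U) : V) = c j w := by
      rw [hf_eq w, Submodule.coe_sum, map_sum]
      have h7 : ∀ i, F ((wv j : W) : V) ((c i w • (b i : U) : U) : V)
          = c i w * ψ i (wv j) := by
        intro i
        rw [Submodule.coe_smul, map_smul, smul_eq_mul]
        rfl
      rw [Finset.sum_congr rfl (fun i _ => h7 i)]
      have h8 : ∀ i, c i w * ψ i (wv j) = if i = j then c i w else 0 := by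
        intro i
        rw [hwv i j]
        by_cases h : i = j <;> simp [h]
      rw [Finset.sum_congr rfl (fun i _ => h8 i)]
      simp
    have h9 : c j w + F (w : V) ((f (wv j) : U) : V) = 0 := by rw [← h6]; exact h5
    have h10 : c j w = -F (w : V) ((f (wv j) : U) : V) := eq_neg_of_add_eq_zero_left h9
    rw [h10]
    have h11 : ((-(f (wv j)) : U) : V) = -((f (wv j) : U) : V) := rfl
    rw [h11, map_neg]
  refine ⟨∑ j, ((-(f (wv j))) ⊗ₜ[k] ((b j : U) : U)), ?_⟩
  refine LinearMap.ext fun w => ?_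
  rw [map_sum, LinearMap.sum_apply]
  rw [hf_eq w]
  apply Finset.sum_congr rfl
  intro j _
  rw [tensorToHom_tmul, ← hcj]

end LagrAux

/-- For a Lagrangian decomposition `V = U ⊕ W`, the assignment `t ↦ W_t`
is a bijection from `Λ²U = {t | t + t²¹ = 0}` onto the set of subspaces `W̃` with
`V = U ⊕ W̃`, `W̃ = W̃^⊥` and `W̃` commensurable with `W`. -/
theorem graphSubspace_bijOn
    {k V : Type*} [Field k] [AddCommGroup V] [Module k V]
    (hchar : (2 : k) ≠ 0)
    (F : LinearMap.BilinForm k V) (hsymm : F.IsSymm) (hnd : F.Nondegenerate)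
    (U W : Submodule k V) (hUW : IsCompl U W)
    (hU : ∀ u ∈ U, ∀ u' ∈ U, F u u' = 0)
    (hW : ∀ w ∈ W, ∀ w' ∈ W, F w w' = 0) :
    Set.BijOn (graphSubspace F U W)
      {t : U ⊗[k] U | t + (TensorProduct.comm k U U) t = 0}
      {W' : Submodule k V | IsCompl U W' ∧ W' = F.orthogonal W' ∧ Commens W' W} := by
  classical
  have hco : U ⊔ W = ⊤ := codisjoint_iff.mp hUW.codisjoint
  have hdisj : Disjoint U W := hUW.disjoint
  have hinj := LagrAux.tensorToHom_injective F U W hsymm hnd hco hU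
  refine ⟨?_, ?_, ?_⟩
  · -- MapsTo
    intro t ht
    simp only [Set.mem_setOf_eq] at ht ⊢
    haveI := LagrAux.finiteDimensional_range_tensorToHom F U W t
    have hgs : graphSubspace F U W t = LagrAux.gsub U W (tensorToHom F U W t) := rfl
    have hcompl : IsCompl U (graphSubspace F U W t) := by
      rw [hgs]; exact LagrAux.isCompl_gsub U W hUW _
    refine ⟨hcompl, ?_, ?_⟩
    · rw [hgs]
      exact LagrAux.eq_orthogonal F U hsymm hnd hU
        (codisjoint_iff.mp (LagrAux.isCompl_gsub U W hUW _).codisjoint)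
        (LagrAux.gsub_isotropic F U W hsymm hU hW ht)
    · rw [hgs]
      exact LagrAux.commens_gsub U W hUW _
  · -- InjOn
    intro t ht s hs h
    exact hinj (LagrAux.gsub_inj U W hdisj h)
  · -- SurjOn
    intro W' hW'
    obtain ⟨hcompl, horth, hcom⟩ := hW'
    set p := U.projectionOnto W' hcompl with hp
    set f : W →ₗ[k] U := -(p.comp W.subtype) with hf
    have hfw_eq : ∀ w : W, ((f w : U) : V) = -((p (w : V) : U) : V) := fun w => rfl
    have hgraph : LagrAux.gsub U W f = W' := by
      apply le_antisymm
      · rintro x ⟨w, rfl⟩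
        rw [LagrAux.gmap_apply]
        have key : (w : V) - ((p ((w : V)) : U) : V) ∈ W' := by
          have hker : p ((w : V) - ((p ((w : V)) : U) : V)) = 0 := by
            rw [map_sub, hp, Submodule.projectionOnto_apply_left hcompl]
            exact sub_self _
          have : (w : V) - ((p ((w : V)) : U) : V) ∈ LinearMap.ker p := hker
          rwa [hp, Submodule.ker_projectionOnto] at this
        have heq : (w : V) + ((f w : U) : V) = (w : V) - ((p ((w : V)) : U) : V) := by
          rw [hfw_eq w]; abel
        rw [heq]
        exact key
      · intro x hx
        have hxv : x ∈ U ⊔ W := hco ▸ Submodule.mem_top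
        obtain ⟨u, hu, w, hw, rfl⟩ := Submodule.mem_sup.mp hxv
        have hpx : p (u + w) = 0 := by
          have : u + w ∈ LinearMap.ker p := by
            rw [hp, Submodule.ker_projectionOnto]; exact hx
          exact this
        have hpu : p u = ⟨u, hu⟩ := Submodule.linearProjOfIsCompl_apply_left hcompl ⟨u, hu⟩
        have hpw : p w = -⟨u, hu⟩ := by
          rw [map_add, hpu] at hpx
          exact eq_neg_of_add_eq_zero_right hpx
        refine ⟨⟨w, hw⟩, ?_⟩
        rw [LagrAux.gmap_apply]
        have hfval : f ⟨w, hw⟩ = ⟨u, hu⟩ := by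
          rw [hf]
          simp only [LinearMap.neg_apply, LinearMap.comp_apply]
          rw [show W.subtype ⟨w, hw⟩ = w from rfl, hpw, neg_neg]
        rw [hfval]
        exact add_comm _ _
    haveI hfd : FiniteDimensional k (LinearMap.range f) :=
      LagrAux.findim_range_of_commens U W hUW f (by rw [hgraph]; exact hcom)
    have hiso : ∀ x ∈ W', ∀ y ∈ W', F x y = 0 := by
      intro x hx y hy
      have hym : y ∈ F.orthogonal W' := horth ▸ hy
      have := LinearMap.BilinForm.mem_orthogonal_iff.mp hym x hx
      exact this
    have hanti : ∀ w w' : W, F w ((f w' : U) : V) + F w' ((f w : U) : V) = 0 := by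
      intro w w'
      have h1 : ((w : V) + ((f w : U) : V)) ∈ W' := hgraph ▸ ⟨w, rfl⟩
      have h2 : ((w' : V) + ((f w' : U) : V)) ∈ W' := hgraph ▸ ⟨w', rfl⟩
      have h0 := hiso _ h1 _ h2
      have e1 : F (w : V) (w' : V) = 0 := hW _ w.2 _ w'.2
      have e2 : F ((f w : U) : V) ((f w' : U) : V) = 0 := hU _ (f w).2 _ (f w').2
      have e3 : F ((f w : U) : V) (w' : V) = F (w' : V) ((f w : U) : V) := by
        have := hsymm.eq ((f w : U) : V) (w' : V); simpa using this
      simp only [map_add, LinearMap.add_apply] at h0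
      linear_combination h0 - e1 - e2 - e3
    obtain ⟨t, ht⟩ := LagrAux.exists_tensor F U W hsymm hnd hco hU f hanti
    have hz : tensorToHom F U W (t + (TensorProduct.comm k U U) t) = 0 := by
      refine LinearMap.ext fun w => ?_
      rw [LinearMap.zero_apply]
      apply LagrAux.eq_zero_of_ortho F U W hsymm hnd hco hU
      intro w'
      have hc1 : ((tensorToHom F U W (t + (TensorProduct.comm k U U) t) w : U) : V)
          = ((tensorToHom F U W t w : U) : V)
            + ((tensorToHom F U W ((TensorProduct.comm k U U) t) w : U) : V) := by
        rw [map_add]; rfl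
      rw [hc1, map_add]
      have hswap := LagrAux.swap_eval F U W t w w'
      rw [← hswap, ht]
      rw [add_comm]
      exact hanti w w'
    have hanti_t : t + (TensorProduct.comm k U U) t = 0 := by
      apply hinj
      rw [hz, map_zero]
    refine ⟨t, hanti_t, ?_⟩
    show graphSubspace F U W t = W'
    have hgs : graphSubspace F U W t = LagrAux.gsub U W (tensorToHom F U W t) := rfl
    rw [hgs, ht]
    exact hgraph
end

section
/- Let (R, δ) be a Lie bialgebra over a field k with char(k) ≠ 2 and t ∈ Λ²R. Then δ_t := δ + ∂_t (where ∂_t(a) = [a⊗1 + 1⊗a, t]) is a Lie bialgebra cobracket on R if and only if the tensor alt((δ⊗1)(t)) − [[t,t]] ∈ R⊗R⊗R is ad-invariant, where [[t,t]] = [t^{12},t^{13}] + [t^{12},t^{23}] + [t^{13},t^{23}] and alt(a⊗b⊗c) = a⊗b⊗c + c⊗a⊗b + b⊗c⊗a. -/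
open TensorProduct

attribute [local instance 100] LieRing.ofAssociativeRing

namespace Stmt5

variable (k R : Type*) [CommRing k] [LieRing R] [LieAlgebra k R]

/-- The cyclic permutation `a ⊗ b ⊗ c ↦ c ⊗ a ⊗ b` on the triple tensor product. -/
noncomputable def cyc : (R ⊗[k] R) ⊗[k] R →ₗ[k] (R ⊗[k] R) ⊗[k] R :=
  ((TensorProduct.assoc k R R R).symm.toLinearMap).comp
    (TensorProduct.comm k (R ⊗[k] R) R).toLinearMap

/-- The alternation map `alt = 1 + cyc + cyc²`. -/
noncomputable def altMap : (R ⊗[k] R) ⊗[k] R →ₗ[k] (R ⊗[k] R) ⊗[k] R :=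
  LinearMap.id + cyc k R + (cyc k R).comp (cyc k R)

/-- The Lie bracket `R ⊗ R → R`, `a ⊗ b ↦ ⁅a, b⁆`, as a linear map. -/
noncomputable def brkt : R ⊗[k] R →ₗ[k] R :=
  TensorProduct.lift (LieModule.toEnd k R R).toLinearMap

/-- `(a ⊗ b) ⊗ (c ⊗ d) ↦ ⁅a,c⁆ ⊗ b ⊗ d` : computes `[t¹², s¹³]`. -/
noncomputable def phi12_13 : (R ⊗[k] R) ⊗[k] (R ⊗[k] R) →ₗ[k] (R ⊗[k] R) ⊗[k] R :=
  ((TensorProduct.assoc k R R R).symm.toLinearMap).comp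
    ((TensorProduct.map (brkt k R) LinearMap.id).comp
      (tensorTensorTensorComm k R R R R).toLinearMap)

/-- `(a ⊗ b) ⊗ (c ⊗ d) ↦ a ⊗ ⁅b,c⁆ ⊗ d` : computes `[t¹², s²³]`. -/
noncomputable def phi12_23 : (R ⊗[k] R) ⊗[k] (R ⊗[k] R) →ₗ[k] (R ⊗[k] R) ⊗[k] R :=
  ((TensorProduct.assoc k R R R).symm.toLinearMap).comp
    ((TensorProduct.map LinearMap.id (TensorProduct.map (brkt k R) LinearMap.id)).comp
      ((TensorProduct.map LinearMap.id (TensorProduct.assoc k R R R).symm.toLinearMap).comp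
        (TensorProduct.assoc k R R (R ⊗[k] R)).toLinearMap))

/-- `(a ⊗ b) ⊗ (c ⊗ d) ↦ a ⊗ c ⊗ ⁅b,d⁆` : computes `[t¹³, s²³]`. -/
noncomputable def phi13_23 : (R ⊗[k] R) ⊗[k] (R ⊗[k] R) →ₗ[k] (R ⊗[k] R) ⊗[k] R :=
  (TensorProduct.map LinearMap.id (brkt k R)).comp
    (tensorTensorTensorComm k R R R R).toLinearMap

/-- `[[t,t]] = [t¹²,t¹³] + [t¹²,t²³] + [t¹³,t²³]`. -/
noncomputable def doubleBracket (t : R ⊗[k] R) : (R ⊗[k] R) ⊗[k] R :=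
  phi12_13 k R (t ⊗ₜ t) + phi12_23 k R (t ⊗ₜ t) + phi13_23 k R (t ⊗ₜ t)

/-- The coboundary `∂ₜ : a ↦ ⁅a ⊗ 1 + 1 ⊗ a, t⁆ = a ∘ t`, as a linear map. -/
noncomputable def coboundary (t : R ⊗[k] R) : R →ₗ[k] R ⊗[k] R :=
  (LieModule.toEnd k R (R ⊗[k] R)).toLinearMap.flip t

/-- `δ` is a Lie bialgebra cobracket: skew-symmetric cocycle satisfying co-Jacobi. -/
def IsLieCobracket (δ : R →ₗ[k] R ⊗[k] R) : Prop :=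
  (∀ a : R, (TensorProduct.comm k R R) (δ a) = -δ a) ∧
  (∀ a b : R, δ ⁅a, b⁆ = ⁅a, δ b⁆ - ⁅b, δ a⁆) ∧
  (∀ a : R, altMap k R ((TensorProduct.map δ LinearMap.id) (δ a)) = 0)

/-- A triple tensor is ad-invariant if it is killed by the adjoint action of every element. -/
def IsAdInvariant3 (s : (R ⊗[k] R) ⊗[k] R) : Prop := ∀ a : R, ⁅a, s⁆ = 0

end Stmt5

section Aux
open Stmt5
variable {k R : Type*} [CommRing k] [LieRing R] [LieAlgebra k R]

@[simp] lemma cyc_tmul (x y z : R) : cyc k R ((x ⊗ₜ y) ⊗ₜ z) = (z ⊗ₜ x) ⊗ₜ y := rfl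
@[simp] lemma brkt_tmul (x y : R) : brkt k R (x ⊗ₜ y) = ⁅x, y⁆ := rfl
@[simp] lemma coboundary_apply (t : R ⊗[k] R) (a : R) : coboundary k R t a = ⁅a, t⁆ := rfl
@[simp] lemma phi12_13_tmul (a b c d : R) :
    phi12_13 k R ((a ⊗ₜ b) ⊗ₜ (c ⊗ₜ d)) = (⁅a,c⁆ ⊗ₜ b) ⊗ₜ d := rfl
@[simp] lemma phi12_23_tmul (a b c d : R) :
    phi12_23 k R ((a ⊗ₜ b) ⊗ₜ (c ⊗ₜ d)) = (a ⊗ₜ ⁅b,c⁆) ⊗ₜ d := rfl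
@[simp] lemma phi13_23_tmul (a b c d : R) :
    phi13_23 k R ((a ⊗ₜ b) ⊗ₜ (c ⊗ₜ d)) = (a ⊗ₜ c) ⊗ₜ ⁅b,d⁆ := rfl
lemma altMap_apply (x : (R ⊗[k] R) ⊗[k] R) :
    altMap k R x = x + cyc k R x + cyc k R (cyc k R x) := rfl
lemma coboundary_add (t t' : R ⊗[k] R) :
    coboundary k R (t + t') = coboundary k R t + coboundary k R t' :=
  map_add ((LieModule.toEnd k R (R ⊗[k] R)).toLinearMap.flip) t t'
lemma comm_lie (a : R) (x : R ⊗[k] R) :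
    TensorProduct.comm k R R ⁅a, x⁆ = ⁅a, TensorProduct.comm k R R x⁆ := by
  induction x using TensorProduct.induction_on with
  | zero => simp
  | tmul p q => simp [TensorProduct.LieModule.lie_tmul_right]; abel
  | add p q hp hq => simp [lie_add, hp, hq]
end Aux
section Aux2
open Stmt5
variable {k R : Type*} [CommRing k] [LieRing R] [LieAlgebra k R]

noncomputable def DD (s t : R ⊗[k] R) : (R ⊗[k] R) ⊗[k] R :=
  phi12_13 k R (s ⊗ₜ t) + phi12_23 k R (s ⊗ₜ t) + phi13_23 k R (s ⊗ₜ t)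

noncomputable def QQ (a : R) (s t : R ⊗[k] R) : (R ⊗[k] R) ⊗[k] R :=
  altMap k R ((TensorProduct.map (coboundary k R s) LinearMap.id) ⁅a, t⁆)

set_option maxRecDepth 10000 in
set_option maxHeartbeats 2000000 in
lemma quad_pure (a x y z w : R) :
    QQ a (x ⊗ₜ[k] y - y ⊗ₜ x) (z ⊗ₜ w - w ⊗ₜ z) + QQ a (z ⊗ₜ w - w ⊗ₜ z) (x ⊗ₜ y - y ⊗ₜ x)
      + ⁅a, DD (x ⊗ₜ[k] y - y ⊗ₜ x) (z ⊗ₜ w - w ⊗ₜ z)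
            + DD (z ⊗ₜ w - w ⊗ₜ z) (x ⊗ₜ y - y ⊗ₜ x)⁆ = 0 := by
  have hzx : ⁅z, x⁆ = -⁅x, z⁆ := (lie_skew z x).symm
  have hwx : ⁅w, x⁆ = -⁅x, w⁆ := (lie_skew w x).symm
  have hzy : ⁅z, y⁆ = -⁅y, z⁆ := (lie_skew z y).symm
  have hwy : ⁅w, y⁆ = -⁅y, w⁆ := (lie_skew w y).symm
  have jxz : ⁅z, ⁅a, x⁆⁆ = ⁅x, ⁅a, z⁆⁆ - ⁅a, ⁅x, z⁆⁆ := by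
    rw [show ⁅z,⁅a,x⁆⁆ = -⁅⁅a,x⁆,z⁆ from (lie_skew z ⁅a,x⁆).symm, lie_lie]; abel
  have jxw : ⁅w, ⁅a, x⁆⁆ = ⁅x, ⁅a, w⁆⁆ - ⁅a, ⁅x, w⁆⁆ := by
    rw [show ⁅w,⁅a,x⁆⁆ = -⁅⁅a,x⁆,w⁆ from (lie_skew w ⁅a,x⁆).symm, lie_lie]; abel
  have jyz : ⁅z, ⁅a, y⁆⁆ = ⁅y, ⁅a, z⁆⁆ - ⁅a, ⁅y, z⁆⁆ := by
    rw [show ⁅z,⁅a,y⁆⁆ = -⁅⁅a,y⁆,z⁆ from (lie_skew z ⁅a,y⁆).symm, lie_lie]; abel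
  have jyw : ⁅w, ⁅a, y⁆⁆ = ⁅y, ⁅a, w⁆⁆ - ⁅a, ⁅y, w⁆⁆ := by
    rw [show ⁅w,⁅a,y⁆⁆ = -⁅⁅a,y⁆,w⁆ from (lie_skew w ⁅a,y⁆).symm, lie_lie]; abel
  simp only [QQ, DD, altMap_apply, lie_sub, lie_add, map_sub, map_add,
    TensorProduct.LieModule.lie_tmul_right, TensorProduct.map_tmul, coboundary_apply,
    LinearMap.id_coe, id_eq, cyc_tmul, sub_tmul, tmul_sub, add_tmul, tmul_add,
    phi12_13_tmul, phi12_23_tmul, phi13_23_tmul, lie_lie,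
    hzx, hwx, hzy, hwy, jxz, jxw, jyz, jyw,
    neg_tmul, tmul_neg, lie_neg, neg_neg, neg_sub, sub_tmul, map_neg, map_smul, smul_tmul', tmul_smul]
  abel
end Aux2
section Aux3
open Stmt5
variable {k R : Type*} [CommRing k] [LieRing R] [LieAlgebra k R]

noncomputable def sk (u : R ⊗[k] R) : R ⊗[k] R := u - TensorProduct.comm k R R u

lemma sk_zero : sk (0 : R ⊗[k] R) = 0 := by simp [sk]
lemma sk_add (u v : R ⊗[k] R) : sk (u + v) = sk u + sk v := by simp [sk]; abel
lemma sk_tmul (x y : R) : sk (x ⊗ₜ[k] y) = x ⊗ₜ y - y ⊗ₜ x := by simp [sk]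

lemma DD_add_left (s s' t : R ⊗[k] R) : DD (s + s') t = DD s t + DD s' t := by
  simp [DD, add_tmul]; abel
lemma DD_add_right (s t t' : R ⊗[k] R) : DD s (t + t') = DD s t + DD s t' := by
  simp [DD, tmul_add]; abel
lemma DD_zero_left (t : R ⊗[k] R) : DD 0 t = 0 := by simp [DD]
lemma DD_zero_right (s : R ⊗[k] R) : DD s 0 = 0 := by simp [DD]

lemma QQ_add_left (a : R) (s s' t : R ⊗[k] R) : QQ a (s + s') t = QQ a s t + QQ a s' t := by
  simp [QQ, coboundary_add, TensorProduct.map_add_left, LinearMap.add_apply, map_add]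
lemma QQ_add_right (a : R) (s t t' : R ⊗[k] R) : QQ a s (t + t') = QQ a s t + QQ a s t' := by
  simp [QQ, lie_add, map_add]
lemma QQ_zero_left (a : R) (t : R ⊗[k] R) : QQ a 0 t = 0 := by
  have h0 : coboundary k R (0 : R ⊗[k] R) = 0 :=
    map_zero ((LieModule.toEnd k R (R ⊗[k] R)).toLinearMap.flip)
  simp [QQ, h0, TensorProduct.map_zero_left, map_zero]
lemma QQ_zero_right (a : R) (s : R ⊗[k] R) : QQ a s 0 = 0 := by simp [QQ]

noncomputable def EE (a : R) (u v : R ⊗[k] R) : (R ⊗[k] R) ⊗[k] R :=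
  QQ a (sk u) (sk v) + QQ a (sk v) (sk u) + ⁅a, DD (sk u) (sk v) + DD (sk v) (sk u)⁆

lemma EE_add_left (a : R) (u u' v : R ⊗[k] R) : EE a (u + u') v = EE a u v + EE a u' v := by
  simp only [EE, sk_add, QQ_add_left, QQ_add_right, DD_add_left, DD_add_right, lie_add]
  abel
lemma EE_add_right (a : R) (u v v' : R ⊗[k] R) : EE a u (v + v') = EE a u v + EE a u v' := by
  simp only [EE, sk_add, QQ_add_left, QQ_add_right, DD_add_left, DD_add_right, lie_add]
  abel
lemma EE_zero_left (a : R) (v : R ⊗[k] R) : EE a 0 v = 0 := by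
  simp [EE, sk_zero, QQ_zero_left, QQ_zero_right, DD_zero_left, DD_zero_right]
lemma EE_zero_right (a : R) (u : R ⊗[k] R) : EE a u 0 = 0 := by
  simp [EE, sk_zero, QQ_zero_left, QQ_zero_right, DD_zero_left, DD_zero_right]

lemma EE_eq_zero (a : R) (u v : R ⊗[k] R) : EE a u v = 0 := by
  induction u using TensorProduct.induction_on with
  | zero => exact EE_zero_left a v
  | tmul x y =>
    induction v using TensorProduct.induction_on with
    | zero => exact EE_zero_right a _
    | tmul z w => simpa [EE, sk_tmul] using quad_pure a x y z w
    | add v1 v2 h1 h2 => rw [EE_add_right, h1, h2, add_zero]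
  | add u1 u2 h1 h2 => rw [EE_add_left, h1, h2, add_zero]
end Aux3
section Aux4
open Stmt5
variable {k R : Type*} [Field k] [LieRing R] [LieAlgebra k R]

lemma smul_cancel {M : Type*} [AddCommGroup M] [Module k M] {c : k} (hc : c ≠ 0)
    {x : M} (h : c • x = 0) : x = 0 := by
  have : x = c⁻¹ • (c • x) := by rw [smul_smul, inv_mul_cancel₀ hc, one_smul]
  rw [this, h, smul_zero]

lemma quad_final (hchar : (2:k) ≠ 0) (a : R) (t : R ⊗[k] R)
    (ht : (TensorProduct.comm k R R) t = -t) :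
    QQ a t t = -⁅a, DD t t⁆ := by
  have hsk : sk t = t + t := by rw [sk, ht, sub_neg_eq_add]
  have h := EE_eq_zero a t t
  rw [EE, hsk] at h
  simp only [QQ_add_left, QQ_add_right, DD_add_left, DD_add_right, lie_add] at h
  have h8 : (8:k) • (QQ a t t + ⁅a, DD t t⁆) = 0 := by
    rw [show ((8:k)) = ((8:ℤ):k) by norm_num,
      Int.cast_smul_eq_zsmul k (8:ℤ) (QQ a t t + ⁅a, DD t t⁆)]
    rw [← h]; abel
  have h8ne : (8:k) ≠ 0 := by
    have : (8:k) = 2^3 := by norm_num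
    rw [this]; exact pow_ne_zero 3 hchar
  exact eq_neg_of_add_eq_zero_left (smul_cancel (k := k) h8ne h8)
end Aux4
section Aux5
open Stmt5
variable {k R : Type*} [CommRing k] [LieRing R] [LieAlgebra k R]

noncomputable def Psi (a x y : R) (u v w : R ⊗[k] R) : (R ⊗[k] R) ⊗[k] R :=
  altMap k R ((⁅a, u⁆ - ⁅x, w⁆) ⊗ₜ y + u ⊗ₜ ⁅a, y⁆ - (⁅a, v⁆ - ⁅y, w⁆) ⊗ₜ x - v ⊗ₜ ⁅a, x⁆)
  + altMap k R ((TensorProduct.map (coboundary k R (x ⊗ₜ y - y ⊗ₜ x)) LinearMap.id) w)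
  - ⁅a, altMap k R (u ⊗ₜ y - v ⊗ₜ x)⁆

set_option maxHeartbeats 1000000 in
lemma Psi_add_u (a x y : R) (u u' v w : R ⊗[k] R) :
    Psi a x y (u + u') v w = Psi a x y u v w + Psi a x y u' v w - Psi a x y 0 v w := by
  simp only [Psi, lie_add, lie_sub, add_tmul, sub_tmul, zero_tmul, lie_zero, map_add, map_sub,
    map_zero]
  abel
end Aux5
section Aux6
open Stmt5
variable {k R : Type*} [CommRing k] [LieRing R] [LieAlgebra k R]

set_option maxHeartbeats 1000000 in
lemma Psi_add_v (a x y : R) (u v v' w : R ⊗[k] R) :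
    Psi a x y u (v + v') w = Psi a x y u v w + Psi a x y u v' w - Psi a x y u 0 w := by
  simp only [Psi, lie_add, lie_sub, add_tmul, sub_tmul, zero_tmul, lie_zero, map_add, map_sub,
    map_zero]
  abel

set_option maxHeartbeats 1000000 in
lemma Psi_add_w (a x y : R) (u v w w' : R ⊗[k] R) :
    Psi a x y u v (w + w') = Psi a x y u v w + Psi a x y u v w' - Psi a x y u v 0 := by
  simp only [Psi, lie_add, lie_sub, add_tmul, sub_tmul, zero_tmul, lie_zero, map_add, map_sub,
    map_zero]
  abel

set_option maxRecDepth 10000 in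
set_option maxHeartbeats 2000000 in
lemma Psi_pure (a x y p q r s m n : R) :
    Psi a x y (p ⊗ₜ[k] q) (r ⊗ₜ[k] s) (sk (m ⊗ₜ[k] n)) = 0 := by
  have hmx : ⁅m, x⁆ = -⁅x, m⁆ := (lie_skew m x).symm
  have hnx : ⁅n, x⁆ = -⁅x, n⁆ := (lie_skew n x).symm
  have hmy : ⁅m, y⁆ = -⁅y, m⁆ := (lie_skew m y).symm
  have hny : ⁅n, y⁆ = -⁅y, n⁆ := (lie_skew n y).symm
  simp only [Psi, sk_tmul, altMap_apply, lie_sub, lie_add, map_sub, map_add,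
    TensorProduct.LieModule.lie_tmul_right, TensorProduct.map_tmul, coboundary_apply,
    LinearMap.id_coe, id_eq, cyc_tmul, sub_tmul, tmul_sub, add_tmul, tmul_add,
    hmx, hnx, hmy, hny, neg_tmul, tmul_neg, lie_neg, neg_neg, neg_sub,
    map_neg, map_smul, smul_tmul', tmul_smul]
  abel
end Aux6
section Aux7
open Stmt5
variable {k R : Type*} [CommRing k] [LieRing R] [LieAlgebra k R]

lemma Psi_pure_w (a x y p q r s : R) (w₀ : R ⊗[k] R) :
    Psi a x y (p ⊗ₜ[k] q) (r ⊗ₜ[k] s) (sk w₀) = 0 := by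
  induction w₀ using TensorProduct.induction_on with
  | zero =>
    have h := Psi_pure (k := k) a x y p q r s 0 (0:R)
    rwa [tmul_zero] at h
  | tmul m n => exact Psi_pure a x y p q r s m n
  | add w1 w2 h1 h2 =>
    have h0 : Psi a x y (p ⊗ₜ[k] q) (r ⊗ₜ[k] s) 0 = 0 := by
      have h := Psi_pure (k := k) a x y p q r s 0 (0:R)
      rwa [tmul_zero, sk_zero] at h
    rw [sk_add, Psi_add_w, h1, h2, h0, add_zero, sub_zero]

lemma Psi_pure_vw (a x y p q : R) (v w₀ : R ⊗[k] R) :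
    Psi a x y (p ⊗ₜ[k] q) v (sk w₀) = 0 := by
  induction v using TensorProduct.induction_on with
  | zero =>
    have h := Psi_pure_w (k := k) a x y p q 0 (0:R) w₀
    rwa [tmul_zero] at h
  | tmul r s => exact Psi_pure_w a x y p q r s w₀
  | add v1 v2 h1 h2 =>
    have h0 : Psi a x y (p ⊗ₜ[k] q) 0 (sk w₀) = 0 := by
      have h := Psi_pure_w (k := k) a x y p q 0 (0:R) w₀
      rwa [tmul_zero] at h
    rw [Psi_add_v, h1, h2, h0, add_zero, sub_zero]

lemma Psi_sk (a x y : R) (u v w₀ : R ⊗[k] R) :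
    Psi a x y u v (sk w₀) = 0 := by
  induction u using TensorProduct.induction_on with
  | zero =>
    have h := Psi_pure_vw (k := k) a x y 0 (0:R) v w₀
    rwa [tmul_zero] at h
  | tmul p q => exact Psi_pure_vw a x y p q v w₀
  | add u1 u2 h1 h2 =>
    have h0 : Psi a x y 0 v (sk w₀) = 0 := by
      have h := Psi_pure_vw (k := k) a x y 0 (0:R) v w₀
      rwa [tmul_zero] at h
    rw [Psi_add_u, h1, h2, h0, add_zero, sub_zero]
end Aux7

section Aux8
open Stmt5
variable {k R : Type*} [Field k] [LieRing R] [LieAlgebra k R]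

lemma Psi_skew (hchar : (2:k) ≠ 0) (a x y : R) (u v w : R ⊗[k] R)
    (hw : (TensorProduct.comm k R R) w = -w) : Psi a x y u v w = 0 := by
  have hsk : sk w = w + w := by rw [sk, hw, sub_neg_eq_add]
  have h := Psi_sk a x y u v w
  rw [hsk, Psi_add_w] at h
  have h0 : Psi a x y u v 0 = 0 := by
    have h' := Psi_sk a x y u v 0
    rwa [sk_zero] at h'
  rw [h0, sub_zero] at h
  have h2 : (2:k) • Psi a x y u v w = 0 := by
    rw [show ((2:k)) = ((2:ℤ):k) by norm_num,
      Int.cast_smul_eq_zsmul k (2:ℤ) (Psi a x y u v w), ← h]; abel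
  exact smul_cancel hchar h2
end Aux8
section Aux9
open Stmt5
variable {k R : Type*} [CommRing k] [LieRing R] [LieAlgebra k R]

noncomputable def GG (δ : R →ₗ[k] R ⊗[k] R) (a : R) (t : R ⊗[k] R) : (R ⊗[k] R) ⊗[k] R :=
  altMap k R ((TensorProduct.map δ LinearMap.id) ⁅a, t⁆)
  + altMap k R ((TensorProduct.map (coboundary k R t) LinearMap.id) (δ a))
  - ⁅a, altMap k R ((TensorProduct.map δ LinearMap.id) t)⁆

lemma GG_add (δ : R →ₗ[k] R ⊗[k] R) (a : R) (t t' : R ⊗[k] R) :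
    GG δ a (t + t') = GG δ a t + GG δ a t' := by
  simp only [GG, lie_add, map_add, coboundary_add, TensorProduct.map_add_left,
    LinearMap.add_apply]
  abel

lemma GG_zero (δ : R →ₗ[k] R ⊗[k] R) (a : R) : GG δ a 0 = 0 := by
  have h0 : coboundary k R (0 : R ⊗[k] R) = 0 :=
    map_zero ((LieModule.toEnd k R (R ⊗[k] R)).toLinearMap.flip)
  simp [GG, h0, TensorProduct.map_zero_left]
end Aux9

section Aux10
open Stmt5
variable {k R : Type*} [Field k] [LieRing R] [LieAlgebra k R]

lemma GG_sk (hchar : (2:k) ≠ 0) (δ : R →ₗ[k] R ⊗[k] R)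
    (hskew : ∀ a : R, (TensorProduct.comm k R R) (δ a) = -δ a)
    (hco : ∀ a b : R, δ ⁅a, b⁆ = ⁅a, δ b⁆ - ⁅b, δ a⁆) (a : R) (u : R ⊗[k] R) :
    GG δ a (sk u) = 0 := by
  induction u using TensorProduct.induction_on with
  | zero => rw [sk_zero]; exact GG_zero δ a
  | tmul x y =>
    have key : GG δ a (x ⊗ₜ y - y ⊗ₜ x) = Psi a x y (δ x) (δ y) (δ a) := by
      simp only [GG, Psi, lie_sub, lie_add, map_sub, map_add, TensorProduct.map_tmul,
        TensorProduct.LieModule.lie_tmul_right, LinearMap.id_coe, id_eq, hco, sub_tmul]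
      abel
    rw [sk_tmul, key]
    exact Psi_skew hchar a x y (δ x) (δ y) (δ a) (hskew a)
  | add u1 u2 h1 h2 => rw [sk_add, GG_add, h1, h2, add_zero]

lemma cross_final (hchar : (2:k) ≠ 0) (δ : R →ₗ[k] R ⊗[k] R)
    (hskew : ∀ a : R, (TensorProduct.comm k R R) (δ a) = -δ a)
    (hco : ∀ a b : R, δ ⁅a, b⁆ = ⁅a, δ b⁆ - ⁅b, δ a⁆) (a : R) (t : R ⊗[k] R)
    (ht : (TensorProduct.comm k R R) t = -t) : GG δ a t = 0 := by
  have hsk : sk t = t + t := by rw [sk, ht, sub_neg_eq_add]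
  have h := GG_sk hchar δ hskew hco a t
  rw [hsk, GG_add] at h
  have h2 : (2:k) • GG δ a t = 0 := by
    rw [show ((2:k)) = ((2:ℤ):k) by norm_num,
      Int.cast_smul_eq_zsmul k (2:ℤ) (GG δ a t), ← h]; abel
  exact smul_cancel hchar h2
end Aux10
open Stmt5

/-- For a Lie bialgebra `(R, δ)` over a field of characteristic ≠ 2 and a
skew tensor `t ∈ Λ²R`, the twisted map `δ_t = δ + ∂ₜ` is a Lie bialgebra cobracket if and
only if `alt((δ⊗1)(t)) − [[t,t]]` is an ad-invariant element of `R ⊗ R ⊗ R`. -/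
theorem twist_isLieCobracket_iff
    {k R : Type*} [Field k] [LieRing R] [LieAlgebra k R]
    (hchar : (2 : k) ≠ 0)
    (δ : R →ₗ[k] R ⊗[k] R) (hδ : IsLieCobracket k R δ)
    (t : R ⊗[k] R) (ht : (TensorProduct.comm k R R) t = -t) :
    IsLieCobracket k R (δ + coboundary k R t) ↔
      IsAdInvariant3 k R
        (altMap k R ((TensorProduct.map δ LinearMap.id) t) - doubleBracket k R t) := by
  obtain ⟨hskew, hco, hjac⟩ := hδ
  -- the master identity
  have star : ∀ a : R,
      altMap k R ((TensorProduct.map (δ + coboundary k R t) LinearMap.id)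
        ((δ + coboundary k R t) a)) =
      ⁅a, altMap k R ((TensorProduct.map δ LinearMap.id) t) - doubleBracket k R t⁆ := by
    intro a
    have hG : GG δ a t = 0 := cross_final hchar δ hskew hco a t ht
    have hQ : QQ a t t = -⁅a, DD t t⁆ := quad_final hchar a t ht
    have hDD : DD t t = doubleBracket k R t := rfl
    have hexp : altMap k R ((TensorProduct.map (δ + coboundary k R t) LinearMap.id)
        ((δ + coboundary k R t) a)) =
        altMap k R ((TensorProduct.map δ LinearMap.id) (δ a))
        + (altMap k R ((TensorProduct.map δ LinearMap.id) ⁅a, t⁆)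
          + altMap k R ((TensorProduct.map (coboundary k R t) LinearMap.id) (δ a)))
        + altMap k R ((TensorProduct.map (coboundary k R t) LinearMap.id) ⁅a, t⁆) := by
      simp only [LinearMap.add_apply, coboundary_apply, TensorProduct.map_add_left, map_add]
      abel
    rw [hexp, hjac a]
    have hGG : altMap k R ((TensorProduct.map δ LinearMap.id) ⁅a, t⁆)
          + altMap k R ((TensorProduct.map (coboundary k R t) LinearMap.id) (δ a))
        = ⁅a, altMap k R ((TensorProduct.map δ LinearMap.id) t)⁆ := by
      have := hG; rw [GG, sub_eq_zero] at this; exact this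
    rw [hGG]
    have hQQ : altMap k R ((TensorProduct.map (coboundary k R t) LinearMap.id) ⁅a, t⁆)
        = -⁅a, doubleBracket k R t⁆ := by rw [← hDD, ← hQ]; rfl
    rw [hQQ, lie_sub, zero_add]
    abel
  constructor
  · intro h a
    have h3 := h.2.2 a
    rw [star a] at h3
    exact h3
  · intro h
    refine ⟨?_, ?_, ?_⟩
    · intro a
      simp only [LinearMap.add_apply, coboundary_apply, map_add, comm_lie, hskew a, ht,
        lie_neg]
      abel
    · intro a b
      simp only [LinearMap.add_apply, coboundary_apply, hco a b, lie_lie, lie_add, lie_sub]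
      abel
    · intro a
      rw [star a, h a]
end
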